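/- Let a > 0 and t > 0. Let (E_k)_{k≥1} be an i.i.d. sequence of random variables with the exponential distribution of rate 1, let N be a random variable with the Poisson distribution of parameter t·e^a/(e^a − 1), and assume N is independent of (E_k). Then for every λ ≥ 0, E[exp(−λ·(e^a − 1)·∑_{k=1}^{N} E_k)] = exp(−t·f_a(λ)); i.e., the compound Poisson random variable (e^a − 1)∑_{k=1}^{N} E_k realizes the subordinator with Laplace exponent f_a at time t. -/

import Mathlib

open MeasureTheory ProbabilityTheory Real Set Filter NNReal ENNReal


lemma exp_moment {c : ℝ} (hc : 0 ≤ c) :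
    ∫ x, Real.exp (-c * x) ∂(expMeasure 1) = (1 + c)⁻¹ := by
  have hb : (0:ℝ) < 1 + c := by linarith
  have hpdf : ∀ x : ℝ, exponentialPDFReal 1 x = if 0 ≤ x then Real.exp (-x) else 0 := by
    intro x
    simp [exponentialPDFReal, gammaPDFReal, Real.Gamma_one, Real.rpow_zero]
  have h1 : expMeasure 1
      = volume.withDensity (fun x => ((Real.toNNReal (exponentialPDFReal 1 x) : ℝ≥0) : ℝ≥0∞)) :=
    rfl
  have hmeas : Measurable fun x => Real.toNNReal (exponentialPDFReal 1 x) :=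
    (measurable_exponentialPDFReal 1).real_toNNReal
  rw [h1, integral_withDensity_eq_integral_smul hmeas]
  have key : ∫ x in Ioi (0:ℝ), Real.exp (-((1+c) * x)) = (1 + c)⁻¹ := by
    have hd : ∀ x ∈ Ici (0:ℝ),
        HasDerivAt (fun x => -(1+c)⁻¹ * Real.exp (-((1+c) * x))) (Real.exp (-((1+c)*x))) x := by
      intro x _
      have h : HasDerivAt (fun x => -(1+c)⁻¹ * Real.exp (-((1+c) * x)))
          (-(1+c)⁻¹ * (Real.exp (-((1+c) * x)) * -((1+c) * 1))) x :=
        ((((hasDerivAt_id x).const_mul (1+c)).neg).exp).const_mul (-(1+c)⁻¹)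
      convert h using 1
      field_simp
    have hint : IntegrableOn (fun x => Real.exp (-((1+c) * x))) (Ioi 0) := by
      have := exp_neg_integrableOn_Ioi 0 hb
      have heq : (fun x : ℝ => Real.exp (-(1+c) * x)) = fun x => Real.exp (-((1+c) * x)) := by
        funext x; ring_nf
      rw [← heq]; exact this
    have htend : Tendsto (fun x => -(1+c)⁻¹ * Real.exp (-((1+c) * x))) atTop (nhds 0) := by
      have h1 : Tendsto (fun x : ℝ => (1+c) * x) atTop atTop :=
        Tendsto.const_mul_atTop hb tendsto_id
      have h2 : Tendsto (fun x : ℝ => Real.exp (-((1+c) * x))) atTop (nhds 0) :=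
        Real.tendsto_exp_neg_atTop_nhds_zero.comp h1
      simpa using h2.const_mul (-(1+c)⁻¹)
    have := integral_Ioi_of_hasDerivAt_of_tendsto' hd hint htend
    rw [this]
    simp
  calc ∫ x, Real.toNNReal (exponentialPDFReal 1 x) • Real.exp (-c * x)
      = ∫ x in Ioi (0:ℝ), Real.exp (-((1+c) * x)) := by
        rw [← integral_Ici_eq_integral_Ioi, ← integral_indicator measurableSet_Ici]
        congr 1
        funext x
        simp only [NNReal.smul_def, Real.coe_toNNReal', hpdf, indicator, mem_Ici]
        split_ifs with h
        · rw [max_eq_left (by positivity), smul_eq_mul, ← Real.exp_add]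
          ring_nf
        · simp
    _ = (1+c)⁻¹ := key

/-- The homographic family `f_a(x) = x e^a / (1 + x (e^a - 1))`. -/
noncomputable def f (a x : ℝ) : ℝ := x * Real.exp a / (1 + x * (Real.exp a - 1))

set_option maxHeartbeats 1000000 in
/-- Let `a > 0`, `t > 0`, let `(E_k)` be an i.i.d. sequence of exponential random variables of
rate `1`, and let `N` be Poisson of parameter `t e^a/(e^a - 1)` independent of `(E_k)`.
Then for every `λ ≥ 0`,
`𝔼[exp (-λ (e^a - 1) ∑_{k<N} E_k)] = exp (-t f_a(λ))`: the compound Poisson random variable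
`(e^a - 1) ∑_{k<N} E_k` realizes the subordinator with Laplace exponent `f_a` at time `t`. -/
theorem compound_poisson_f (a t : ℝ) (ha : 0 < a) (ht : 0 < t)
    {Ω : Type*} [MeasurableSpace Ω] (P : Measure Ω) [IsProbabilityMeasure P]
    (E : ℕ → Ω → ℝ) (N : Ω → ℕ)
    (hEmeas : ∀ k, Measurable (E k))
    (hNmeas : Measurable N)
    (hEdist : ∀ k, P.map (E k) = expMeasure 1)
    (hEindep : iIndepFun (m := fun _ => Real.measurableSpace) E P)
    (hNindep : IndepFun N (fun ω => fun k => E k ω) P)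
    (hNdist : P.map N = poissonMeasure (t * Real.exp a / (Real.exp a - 1)).toNNReal) :
    ∀ l : ℝ, 0 ≤ l →
      ∫ ω, Real.exp (-l * (Real.exp a - 1) * ∑ k ∈ Finset.range (N ω), E k ω) ∂P =
        Real.exp (-t * f a l) := by
  intro l hl
  have hea : (1:ℝ) < Real.exp a := by
    have := Real.exp_lt_exp.2 ha; simpa using this
  have hea1 : (0:ℝ) < Real.exp a - 1 := by linarith
  set c : ℝ := l * (Real.exp a - 1) with hcdef
  have hc : 0 ≤ c := mul_nonneg hl hea1.le
  have hb : (0:ℝ) < 1 + c := by linarith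
  set r : ℝ := (1 + c)⁻¹ with hrdef
  have hr0 : 0 ≤ r := by positivity
  have hr1 : r ≤ 1 := by
    rw [hrdef]; rw [inv_le_one_iff₀]; right; linarith
  set μ : ℝ := t * Real.exp a / (Real.exp a - 1) with hμdef
  have hμpos : 0 < μ := by positivity
  have hμcoe : ((μ.toNNReal : ℝ≥0) : ℝ) = μ := Real.coe_toNNReal _ hμpos.le
  -- per-n integral
  have hsum : ∀ n : ℕ, ∫ ω, Real.exp (-c * ∑ k ∈ Finset.range n, E k ω) ∂P = r ^ n := by
    intro n
    have h2 : ∀ k : ℕ, mgf (E k) P (-c) = r := by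
      intro k
      rw [mgf]
      have : ∫ ω, Real.exp (-c * E k ω) ∂P = ∫ x, Real.exp (-c * x) ∂(P.map (E k)) := by
        rw [integral_map (hEmeas k).aemeasurable
          (measurable_const_mul (-c)).exp.aestronglyMeasurable]
      rw [this, hEdist k, exp_moment hc]
    have h1 := hEindep.mgf_sum hEmeas (Finset.range n) (t := -c)
    rw [mgf] at h1
    have heq : (fun ω => Real.exp (-c * (∑ i ∈ Finset.range n, E i) ω))
        = fun ω => Real.exp (-c * ∑ k ∈ Finset.range n, E k ω) := by
      funext ω; rw [Finset.sum_apply]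
    rw [heq] at h1
    rw [h1]
    simp [h2]
  -- joint distribution
  set Y : Ω → (ℕ → ℝ) := fun ω k => E k ω with hYdef
  have hY : Measurable Y := measurable_pi_lambda _ hEmeas
  have hmap : P.map (fun ω => (Y ω, N ω)) = (P.map Y).prod (P.map N) :=
    (indepFun_iff_map_prod_eq_prod_map_map hY.aemeasurable hNmeas.aemeasurable).1 hNindep.symm
  set G : (ℕ → ℝ) × ℕ → ℝ := fun p => Real.exp (-c * ∑ k ∈ Finset.range p.2, p.1 k) with hGdef
  have hGn : ∀ n : ℕ, Measurable fun x : ℕ → ℝ => Real.exp (-c * ∑ k ∈ Finset.range n, x k) := by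
    intro n
    exact ((Finset.measurable_sum (Finset.range n)
      (fun k _ => measurable_pi_apply k)).const_mul (-c)).exp
  have hG : Measurable G := measurable_from_prod_countable_left fun n => hGn n
  haveI : IsProbabilityMeasure (P.map Y) := Measure.isProbabilityMeasure_map hY.aemeasurable
  haveI : IsProbabilityMeasure (P.map N) := Measure.isProbabilityMeasure_map hNmeas.aemeasurable
  -- a.e. bound on product
  set B : Set (ℕ → ℝ) := ⋃ k, (fun x : ℕ → ℝ => x k) ⁻¹' (Iio 0) with hBdef
  have hBmeas : MeasurableSet B :=
    MeasurableSet.iUnion fun k => (measurable_pi_apply k) measurableSet_Iio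
  have hBzero : (P.map Y) B = 0 := by
    refine le_antisymm (le_trans (measure_iUnion_le _) ?_) zero_le
    have : ∀ k : ℕ, (P.map Y) ((fun x : ℕ → ℝ => x k) ⁻¹' (Iio 0)) = 0 := by
      intro k
      rw [Measure.map_apply hY ((measurable_pi_apply k) measurableSet_Iio)]
      have : Y ⁻¹' ((fun x : ℕ → ℝ => x k) ⁻¹' (Iio 0)) = E k ⁻¹' (Iio 0) := rfl
      rw [this, ← Measure.map_apply (hEmeas k) measurableSet_Iio, hEdist k]
      have : expMeasure 1 (Iio 0) = ∫⁻ x in Iio (0:ℝ), exponentialPDF 1 x := by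
        rw [expMeasure, gammaMeasure, withDensity_apply _ measurableSet_Iio]
        rfl
      rw [this, lintegral_exponentialPDF_of_nonpos le_rfl]
    simp [this]
  have hGbound : ∀ᵐ p ∂((P.map Y).prod (P.map N)), ‖G p‖ ≤ 1 := by
    have hsub : {p : (ℕ → ℝ) × ℕ | ¬ ‖G p‖ ≤ 1} ⊆ B ×ˢ Set.univ := by
      intro p hp
      simp only [mem_setOf_eq, not_le] at hp
      refine ⟨?_, trivial⟩
      by_contra hB
      have hpos : ∀ k, 0 ≤ p.1 k := by
        intro k
        by_contra hk
        exact hB (mem_iUnion.2 ⟨k, by simpa using lt_of_not_ge hk⟩)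
      have hsum0 : 0 ≤ ∑ k ∈ Finset.range p.2, p.1 k :=
        Finset.sum_nonneg fun k _ => hpos k
      have hle : G p ≤ 1 := by
        rw [hGdef]
        apply Real.exp_le_one_iff.2
        apply mul_nonpos_of_nonpos_of_nonneg <;> [linarith; exact hsum0]
      have hnorm : ‖G p‖ = G p := Real.norm_of_nonneg (Real.exp_nonneg _)
      rw [hnorm] at hp
      linarith
    rw [ae_iff]
    refine measure_mono_null hsub ?_
    rw [Measure.prod_prod, hBzero, zero_mul]
  have hGint : Integrable G ((P.map Y).prod (P.map N)) :=
    Integrable.mono' (integrable_const 1) hG.aestronglyMeasurable hGbound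
  -- main chain
  have step1 : ∫ ω, Real.exp (-l * (Real.exp a - 1) * ∑ k ∈ Finset.range (N ω), E k ω) ∂P
      = ∫ ω, G (Y ω, N ω) ∂P := by
    congr 1; funext ω; simp only [hGdef, hYdef, hcdef]; ring_nf
  have step2 : ∫ ω, G (Y ω, N ω) ∂P = ∫ p, G p ∂((P.map Y).prod (P.map N)) := by
    rw [← hmap, integral_map (hY.aemeasurable.prodMk hNmeas.aemeasurable)
      hG.aestronglyMeasurable]
  have step3 : ∫ p, G p ∂((P.map Y).prod (P.map N))
      = ∫ n, ∫ x, G (x, n) ∂(P.map Y) ∂(P.map N) := integral_prod_symm _ hGint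
  have hinner : ∀ n : ℕ, ∫ x, G (x, n) ∂(P.map Y) = r ^ n := by
    intro n
    rw [integral_map hY.aemeasurable (hGn n).aestronglyMeasurable]
    exact hsum n
  have step4 : ∫ n, ∫ x, G (x, n) ∂(P.map Y) ∂(P.map N) = ∫ n : ℕ, r ^ n ∂(P.map N) := by
    congr 1; funext n; exact hinner n
  have hrint : Integrable (fun n : ℕ => r ^ n) (poissonMeasure μ.toNNReal) := by
    refine Integrable.mono' (integrable_const 1) measurable_from_top.aestronglyMeasurable ?_
    filter_upwards with n
    rw [Real.norm_of_nonneg (by positivity)]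
    exact pow_le_one₀ hr0 hr1
  have step5 : ∫ n : ℕ, r ^ n ∂(P.map N)
      = ∑' n : ℕ, (poissonPMF μ.toNNReal n).toReal * r ^ n := by
    rw [hNdist, integral_poissonMeasure]
    congr 1; funext n
    rw [← poissonPMFReal_ofReal_eq_poissonPMF, ENNReal.toReal_ofReal poissonPMFReal_nonneg,
      poissonPMFReal, smul_eq_mul]
  -- sum evaluation
  have hexp_tsum : ∀ y : ℝ, ∑' n : ℕ, y ^ n / n.factorial = Real.exp y := by
    intro y
    rw [Real.exp_eq_exp_ℝ, NormedSpace.exp_eq_tsum ℝ]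
    exact tsum_congr fun n => by rw [smul_eq_mul, div_eq_inv_mul]
  have step6 : ∑' n : ℕ, (poissonPMF μ.toNNReal n).toReal * r ^ n = Real.exp (-μ + μ * r) := by
    have hterm : ∀ n : ℕ, (poissonPMF μ.toNNReal n).toReal * r ^ n
        = Real.exp (-μ) * ((μ * r) ^ n / n.factorial) := by
      intro n
      have h0 : (poissonPMF μ.toNNReal) n = ENNReal.ofReal (poissonPMFReal μ.toNNReal n) := rfl
      rw [h0, ENNReal.toReal_ofReal poissonPMFReal_nonneg, poissonPMFReal, hμcoe, mul_pow]
      ring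
    rw [tsum_congr hterm, _root_.tsum_mul_left, hexp_tsum (μ * r), ← Real.exp_add]
  rw [step1, step2, step3, step4, step5, step6]
  congr 1
  rw [hμdef, hrdef, hcdef, f]
  field_simp
  ring
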